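/- Let m ≥ 1 and let L be a positive integer with 2m | L such that M = L/(2m) is even. Rearrange G^{(z^m+z^{−m})}(L) by, for each residue r ∈ {1,…,m}, listing first the sites r, r+2m, …, r+(M−1)·2m and then the sites r+m, r+m+2m, …, r+m+(M−1)·2m. Then: (i) all entries of G^{(z^m+z^{−m})}(L) between sites belonging to different residues r ≠ r' (mod m) vanish; (ii) for each r, the entries between two sites both of the form r+(a−1)·2m vanish, and likewise between two sites both of the form r+m+(a−1)·2m, so each rearranged block has the form [[0, X],[X^T, 0]] with (X)_{ab} = G^{(z^m+z^{−m})}(L)_{r+(a−1)·2m, r+m+(b−1)·2m}; (iii) the matrix X is the same M×M matrix for every r ∈ {1,…,m}; and (iv) there exist an M×M permutation matrix P, a diagonal unitary matrix U, and a sign ε ∈ {+1,−1} such that X = ε · U P^T G^{(z+1)}(M) P U^*. -/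

import Mathlib

open scoped BigOperators Matrix

/-- `θ_k = (2π/L)(k - 1/2)` for `k = 1, …, L` (here `k : Fin L` is the 0-based index,
so `θ_k = (2π/L)(k + 1/2)`). -/
noncomputable def theta (L : ℕ) (k : Fin L) : ℝ :=
  2 * Real.pi / L * ((k : ℝ) + 1 / 2)

/-- The half-shifted correlation matrix
`G^{(f)}(L)_{nm} = ((-1)^{n-m}/L) Σ_{k=1}^{L} (f(e^{iθ_k})/|f(e^{iθ_k})|) e^{iθ_k (n-m)}`. -/
noncomputable def Gf (L : ℕ) (f : ℂ → ℂ) : Matrix (Fin L) (Fin L) ℂ :=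
  Matrix.of fun n m : Fin L =>
    (-1 : ℂ) ^ ((n : ℤ) - (m : ℤ)) / (L : ℂ) *
      ∑ k : Fin L,
        f (Complex.exp (Complex.I * (theta L k : ℂ))) /
            ((‖f (Complex.exp (Complex.I * (theta L k : ℂ)))‖ : ℝ) : ℂ) *
          Complex.exp (Complex.I * (theta L k : ℂ) * (((n : ℤ) - (m : ℤ) : ℤ) : ℂ))

/-- The site `r + (a-1)·2m` (0-based: `r + a·2m`) in a chain of length `L = 2m·M`. -/
def siteA (m M L : ℕ) (h : 2 * m * M = L) (r : Fin m) (a : Fin M) : Fin L :=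
  ⟨(r : ℕ) + (a : ℕ) * (2 * m), by
    have h1 : (r : ℕ) + (a : ℕ) * (2 * m) < ((a : ℕ) + 1) * (2 * m) := by
      have := r.isLt; nlinarith
    have h2 : ((a : ℕ) + 1) * (2 * m) ≤ M * (2 * m) := Nat.mul_le_mul_right _ a.isLt
    have h3 : M * (2 * m) = L := by rw [Nat.mul_comm]; exact h
    exact lt_of_lt_of_le h1 (le_of_le_of_eq h2 h3)⟩

/-- The site `r + m + (a-1)·2m` (0-based: `r + m + a·2m`) in a chain of length `L = 2m·M`. -/
def siteB (m M L : ℕ) (h : 2 * m * M = L) (r : Fin m) (a : Fin M) : Fin L :=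
  ⟨(r : ℕ) + m + (a : ℕ) * (2 * m), by
    have h1 : (r : ℕ) + m + (a : ℕ) * (2 * m) < ((a : ℕ) + 1) * (2 * m) := by
      have := r.isLt; nlinarith
    have h2 : ((a : ℕ) + 1) * (2 * m) ≤ M * (2 * m) := Nat.mul_le_mul_right _ a.isLt
    have h3 : M * (2 * m) = L := by rw [Nat.mul_comm]; exact h
    exact lt_of_lt_of_le h1 (le_of_le_of_eq h2 h3)⟩

/-- The permutation matrix of `σ` (with `P_{ij} = δ_{i, σ(j)}`). -/
def permMat {M : ℕ} (σ : Equiv.Perm (Fin M)) : Matrix (Fin M) (Fin M) ℂ :=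
  Matrix.of fun i j => if σ j = i then 1 else 0

-- ===== auxiliary definitions =====
noncomputable def thetaN (L : ℕ) (k : ℕ) : ℝ := 2 * Real.pi / L * ((k : ℝ) + 1 / 2)
noncomputable def phiA (M : ℕ) (k : ℕ) : ℝ := Real.pi / M * (k + 1/2)
noncomputable def sgA (M k : ℕ) : ℂ := if 0 < Real.cos (phiA M k) then 1 else -1
noncomputable def TA (M : ℕ) (q : ℤ) : ℂ :=
  ∑ j : Fin M, sgA M (j : ℕ) * Complex.exp (Complex.I * ((phiA M (j : ℕ) : ℝ) : ℂ) * (q : ℂ))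
noncomputable def BB (m M : ℕ) (δ : ℤ) : ℂ :=
  ∑ k : Fin (2*m*M), sgA M (k : ℕ) *
    Complex.exp (Complex.I * ((thetaN (2*m*M) (k : ℕ) : ℝ) : ℂ) * (δ : ℂ))

lemma theta_eq (L : ℕ) (k : Fin L) : theta L k = thetaN L (k : ℕ) := rfl

-- ===== basic sign/phase lemmas =====
lemma negOne_zpow_congr (s t : ℤ) (h : Even (s - t)) : (-1:ℂ)^s = (-1:ℂ)^t := by
  obtain ⟨c, hc⟩ := h
  have hs : s = t + 2*c := by omega
  rw [hs, zpow_add₀ (by norm_num : (-1:ℂ) ≠ 0), zpow_mul]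
  norm_num

lemma cos_phiA_ne (M : ℕ) (hM : Even M) (hM0 : M ≠ 0) (k : ℕ) : Real.cos (phiA M k) ≠ 0 := by
  intro h
  rw [Real.cos_eq_zero_iff] at h
  obtain ⟨n, hn⟩ := h
  have hMr : (M:ℝ) ≠ 0 := Nat.cast_ne_zero.mpr hM0
  have hn' : Real.pi / M * (k + 1/2) = (2 * n + 1) * Real.pi / 2 := hn
  field_simp at hn'
  have h2 : (2*(k:ℝ)+1) * (2*Real.pi) = ((2*n+1)*M) * (2*Real.pi) := by linear_combination (2*Real.pi) * hn'
  have key : (2*(k:ℝ)+1) = (2*n+1)*M := mul_right_cancel₀ (by positivity) h2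
  have key2 : (2*(k:ℤ)+1) = (2*n+1)*M := by exact_mod_cast key
  have hev : Even ((2*(n:ℤ)+1)*(M:ℤ)) := (Int.even_coe_nat M |>.mpr hM).mul_left _
  rw [← key2] at hev
  obtain ⟨d, hd⟩ := hev
  omega

lemma phiA_add (M : ℕ) (hM0 : M ≠ 0) (k t : ℕ) :
    phiA M (k + M * t) = phiA M k + Real.pi * t := by
  have hMr : (M:ℝ) ≠ 0 := Nat.cast_ne_zero.mpr hM0
  unfold phiA; push_cast; field_simp; ring

lemma cos_phiA_add (M : ℕ) (hM0 : M ≠ 0) (k t : ℕ) :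
    Real.cos (phiA M (k + M * t)) = (-1)^t * Real.cos (phiA M k) := by
  rw [phiA_add M hM0]
  induction t with
  | zero => simp
  | succ s ih =>
      push_cast
      rw [show phiA M k + Real.pi * ((s:ℝ)+1) = (phiA M k + Real.pi * s) + Real.pi by ring,
        Real.cos_add_pi]
      push_cast at ih
      rw [ih]; ring

lemma sgA_add (M : ℕ) (hM : Even M) (hM0 : M ≠ 0) (k t : ℕ) :
    sgA M (k + M * t) = (-1:ℂ)^t * sgA M k := by
  have hne := cos_phiA_ne M hM hM0 k
  unfold sgA
  rw [cos_phiA_add M hM0]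
  rcases Nat.even_or_odd t with ht | ht
  · rw [ht.neg_one_pow]; simp [Even.neg_one_pow (by exact_mod_cast ht : Even t)]
  · rw [ht.neg_one_pow]
    have : (-1:ℂ)^t = -1 := ht.neg_one_pow
    rw [this]
    rcases lt_or_gt_of_ne hne with h | h
    · rw [if_pos (by nlinarith), if_neg (by linarith)]; ring
    · rw [if_neg (by nlinarith), if_pos h]; ring

lemma sgA_period (M : ℕ) (hM0 : M ≠ 0) (k t : ℕ) :
    sgA M (k + M * (2*t)) = sgA M k := by
  unfold sgA
  rw [cos_phiA_add M hM0]
  norm_num [pow_mul]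

lemma phiA_rev (M : ℕ) (hM0 : M ≠ 0) (j : ℕ) (hj : j < M) :
    phiA M (M - 1 - j) = Real.pi - phiA M j := by
  have hMr : (M:ℝ) ≠ 0 := Nat.cast_ne_zero.mpr hM0
  unfold phiA
  have hc : ((M - 1 - j : ℕ) : ℝ) = (M:ℝ) - 1 - j := by
    have h1 : 1 + j ≤ M := by omega
    push_cast [Nat.sub_sub, Nat.cast_sub h1]
    ring
  rw [hc]; field_simp; ring

lemma sgA_rev (M : ℕ) (hM : Even M) (hM0 : M ≠ 0) (j : ℕ) (hj : j < M) :
    sgA M (M - 1 - j) = - sgA M j := by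
  have hne := cos_phiA_ne M hM hM0 j
  unfold sgA
  rw [phiA_rev M hM0 j hj, Real.cos_pi_sub]
  rcases lt_or_gt_of_ne hne with h | h
  · rw [if_pos (by linarith), if_neg (by linarith)]; ring
  · rw [if_neg (by linarith), if_pos h]

-- ===== exponential lemmas =====
lemma expI_nat (x : ℝ) (t : ℕ) (q : ℤ) :
    Complex.exp (Complex.I * (((x + Real.pi * t : ℝ)):ℂ) * (q:ℂ)) =
      (-1:ℂ)^((t:ℤ)*q) * Complex.exp (Complex.I * (x:ℂ) * (q:ℂ)) := by
  rw [show Complex.I * (((x + Real.pi * t : ℝ)):ℂ) * (q:ℂ)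
      = (((t:ℤ)*q : ℤ) : ℂ) * ((Real.pi:ℂ) * Complex.I) + Complex.I * (x:ℂ) * (q:ℂ) by
        push_cast; ring,
    Complex.exp_add, Complex.exp_int_mul, Complex.exp_pi_mul_I]

lemma expI_pi_sub (x : ℝ) (q : ℤ) (hq : Odd q) :
    Complex.exp (Complex.I * (((Real.pi - x : ℝ)):ℂ) * (q:ℂ)) =
      - Complex.exp (Complex.I * (x:ℂ) * ((-q : ℤ):ℂ)) := by
  rw [show Complex.I * (((Real.pi - x : ℝ)):ℂ) * (q:ℂ)
      = ((q : ℤ) : ℂ) * ((Real.pi:ℂ) * Complex.I) + Complex.I * (x:ℂ) * (((-q:ℤ)):ℂ) by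
        push_cast; ring,
    Complex.exp_add, Complex.exp_int_mul, Complex.exp_pi_mul_I, hq.neg_one_zpow]
  ring

-- ===== ratio lemmas =====
lemma div_abs_sign (c : ℝ) (hc : c ≠ 0) :
    ((2*c:ℝ):ℂ) / ((‖((2*c:ℝ):ℂ)‖ : ℝ):ℂ) = (if 0 < c then 1 else -1) := by
  rw [Complex.norm_real, Real.norm_eq_abs]
  rcases lt_or_gt_of_ne hc with h | h
  · rw [if_neg (by linarith), abs_of_neg (by linarith)]
    push_cast
    rw [div_neg, div_self (mul_ne_zero two_ne_zero (Complex.ofReal_ne_zero.mpr hc))]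
  · rw [if_pos h, abs_of_pos (by linarith)]
    exact div_self (by exact_mod_cast mul_ne_zero two_ne_zero hc)

lemma m_theta (m M : ℕ) (hm : m ≠ 0) (hM0 : M ≠ 0) (k : ℕ) :
    (m : ℝ) * thetaN (2*m*M) k = phiA M k := by
  have hmr : (m:ℝ) ≠ 0 := Nat.cast_ne_zero.mpr hm
  have hMr : (M:ℝ) ≠ 0 := Nat.cast_ne_zero.mpr hM0
  unfold thetaN phiA
  push_cast
  field_simp

lemma value_big (m M : ℕ) (hm : m ≠ 0) (hM0 : M ≠ 0) (k : ℕ) :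
    (Complex.exp (Complex.I * ((thetaN (2*m*M) k : ℝ) : ℂ)))^(m:ℤ)
      + (Complex.exp (Complex.I * ((thetaN (2*m*M) k : ℝ) : ℂ)))^(-(m:ℤ))
      = ((2 * Real.cos (phiA M k) : ℝ) : ℂ) := by
  have hφ : (m:ℝ) * thetaN (2*m*M) k = phiA M k := m_theta m M hm hM0 k
  rw [← Complex.exp_int_mul _ (m:ℤ), ← Complex.exp_int_mul _ (-(m:ℤ))]
  push_cast
  rw [show (m:ℂ) * (Complex.I * ((thetaN (2*m*M) k : ℝ):ℂ)) = ((phiA M k : ℝ):ℂ) * Complex.I by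
      rw [← hφ]; push_cast; ring,
    show -(m:ℂ) * (Complex.I * ((thetaN (2*m*M) k : ℝ):ℂ)) = -((phiA M k : ℝ):ℂ) * Complex.I by
      rw [← hφ]; push_cast; ring,
    ← Complex.two_cos]

lemma ratio_big (m M : ℕ) (hm : m ≠ 0) (hM : Even M) (hM0 : M ≠ 0) (k : ℕ) :
    ((Complex.exp (Complex.I * ((thetaN (2*m*M) k : ℝ) : ℂ)))^(m:ℤ)
      + (Complex.exp (Complex.I * ((thetaN (2*m*M) k : ℝ) : ℂ)))^(-(m:ℤ))) /
      ((‖(Complex.exp (Complex.I * ((thetaN (2*m*M) k : ℝ) : ℂ)))^(m:ℤ)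
      + (Complex.exp (Complex.I * ((thetaN (2*m*M) k : ℝ) : ℂ)))^(-(m:ℤ))‖ : ℝ) : ℂ)
      = sgA M k := by
  rw [value_big m M hm hM0 k]
  unfold sgA
  exact div_abs_sign _ (cos_phiA_ne M hM hM0 k)

lemma theta_small (M : ℕ) (hM0 : M ≠ 0) (j : ℕ) :
    thetaN M j = 2 * phiA M j := by
  have hMr : (M:ℝ) ≠ 0 := Nat.cast_ne_zero.mpr hM0
  unfold thetaN phiA
  field_simp

lemma value_small (M : ℕ) (hM0 : M ≠ 0) (j : ℕ) :
    Complex.exp (Complex.I * ((thetaN M j : ℝ) : ℂ)) + 1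
      = Complex.exp (Complex.I * ((phiA M j : ℝ):ℂ)) * ((2 * Real.cos (phiA M j) : ℝ) : ℂ) := by
  rw [theta_small M hM0 j]
  have key : ((2 * Real.cos (phiA M j) : ℝ) : ℂ) = 2 * Complex.cos ((phiA M j : ℝ):ℂ) := by
    push_cast; ring
  rw [key, Complex.two_cos, mul_add, ← Complex.exp_add, ← Complex.exp_add]
  rw [show Complex.I * ((2 * phiA M j:ℝ):ℂ) = Complex.I * ((phiA M j:ℝ):ℂ) + ((phiA M j:ℝ):ℂ) * Complex.I by push_cast; ring]
  rw [show Complex.I * ((phiA M j:ℝ):ℂ) + -((phiA M j:ℝ):ℂ) * Complex.I = 0 by ring, Complex.exp_zero]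

lemma ratio_small (M : ℕ) (hM : Even M) (hM0 : M ≠ 0) (j : ℕ) :
    (Complex.exp (Complex.I * ((thetaN M j : ℝ) : ℂ)) + 1) /
      ((‖Complex.exp (Complex.I * ((thetaN M j : ℝ) : ℂ)) + 1‖ : ℝ) : ℂ)
      = Complex.exp (Complex.I * ((phiA M j : ℝ):ℂ)) * sgA M j := by
  rw [value_small M hM0 j]
  rw [norm_mul]
  have habs : ‖(Complex.exp (Complex.I * ((phiA M j : ℝ):ℂ)))‖ = 1 := by
    rw [mul_comm]
    exact Complex.norm_exp_ofReal_mul_I _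
  rw [habs, one_mul, mul_div_assoc]
  congr 1
  unfold sgA
  exact div_abs_sign _ (cos_phiA_ne M hM hM0 j)

-- ===== sum reindexing lemmas =====
lemma thetaN_shift_small (m M : ℕ) (hm : m ≠ 0) (hM0 : M ≠ 0) (j t : ℕ) :
    thetaN (2*m*M) (j + 2*M*t) = thetaN (2*m*M) j + 2*Real.pi/m * t := by
  have hmr : (m:ℝ) ≠ 0 := Nat.cast_ne_zero.mpr hm
  have hMr : (M:ℝ) ≠ 0 := Nat.cast_ne_zero.mpr hM0
  unfold thetaN
  push_cast
  field_simp
  ring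

lemma BB_mq (m M : ℕ) (hm : m ≠ 0) (hM : Even M) (hM0 : M ≠ 0) (q : ℤ) :
    BB m M ((m:ℤ)*q) = (∑ t : Fin (2*m), (-1:ℂ)^(((t:ℕ):ℤ)*(1+q))) * TA M q := by
  unfold BB
  rw [← Equiv.sum_comp (finProdFinEquiv : Fin (2*m) × Fin M ≃ Fin (2*m*M)),
    Fintype.sum_prod_type, Finset.sum_mul]
  apply Finset.sum_congr rfl
  intro t _
  rw [TA, Finset.mul_sum]
  apply Finset.sum_congr rfl
  intro j _
  have hval : ((finProdFinEquiv (t, j) : Fin (2*m*M)) : ℕ) = (j:ℕ) + M * (t:ℕ) := by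
    simp [finProdFinEquiv_apply_val]
  have hexp : Complex.I * ((thetaN (2*m*M) ((finProdFinEquiv (t,j) : Fin (2*m*M)) : ℕ) : ℝ):ℂ)
        * (((m:ℤ)*q : ℤ):ℂ)
      = Complex.I * ((phiA M ((j:ℕ) + M*(t:ℕ)) : ℝ):ℂ) * (q:ℂ) := by
    rw [hval, ← m_theta m M hm hM0 ((j:ℕ) + M*(t:ℕ))]
    push_cast
    ring
  rw [hexp, hval, sgA_add M hM hM0, phiA_add M hM0, expI_nat]
  have hsign : ((-1:ℂ)^((t:ℕ)) * (-1:ℂ)^(((t:ℕ):ℤ)*q)) = (-1:ℂ)^(((t:ℕ):ℤ)*(1+q)) := by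
    rw [← zpow_natCast (-1:ℂ) (t:ℕ), ← zpow_add₀ (by norm_num : (-1:ℂ) ≠ 0)]
    congr 1; ring
  rw [← hsign]
  ring

lemma sum_sign_odd (n : ℕ) (q : ℤ) (hq : Odd q) :
    (∑ t : Fin n, (-1:ℂ)^(((t:ℕ):ℤ)*(1+q))) = (n:ℂ) := by
  have h : ∀ t : Fin n, (-1:ℂ)^(((t:ℕ):ℤ)*(1+q)) = 1 := by
    intro t
    apply Even.neg_one_zpow
    obtain ⟨c, hc⟩ := hq
    exact ⟨((t:ℕ):ℤ)*(c+1), by rw [hc]; ring⟩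
  simp [h]

lemma sum_sign_even (m : ℕ) (q : ℤ) (hq : Even q) :
    (∑ t : Fin (2*m), (-1:ℂ)^(((t:ℕ):ℤ)*(1+q))) = 0 := by
  have h : ∀ t : ℕ, (-1:ℂ)^(((t:ℤ))*(1+q)) = (-1:ℂ)^t := by
    intro t
    rw [← zpow_natCast (-1:ℂ) t]
    apply negOne_zpow_congr
    obtain ⟨c, hc⟩ := hq
    exact ⟨(t:ℤ)*c, by rw [hc]; ring⟩
  calc (∑ t : Fin (2*m), (-1:ℂ)^(((t:ℕ):ℤ)*(1+q)))
      = ∑ t : Fin (2*m), (-1:ℂ)^((t:ℕ)) := by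
        apply Finset.sum_congr rfl; intro t _; exact h (t:ℕ)
    _ = ∑ i ∈ Finset.range (2*m), (-1:ℂ)^i := Fin.sum_univ_eq_sum_range _ _
    _ = 0 := by rw [neg_one_geom_sum, if_pos ⟨m, two_mul m⟩]

lemma BB_odd (m M : ℕ) (hm : m ≠ 0) (hM : Even M) (hM0 : M ≠ 0) (q : ℤ) (hq : Odd q) :
    BB m M ((m:ℤ)*q) = ((2*m : ℕ):ℂ) * TA M q := by
  rw [BB_mq m M hm hM hM0 q, sum_sign_odd _ q hq]

lemma BB_even (m M : ℕ) (hm : m ≠ 0) (hM : Even M) (hM0 : M ≠ 0) (q : ℤ) (hq : Even q) :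
    BB m M ((m:ℤ)*q) = 0 := by
  rw [BB_mq m M hm hM hM0 q, sum_sign_even m q hq, zero_mul]

lemma BB_nondvd (m M : ℕ) (hm : m ≠ 0) (hM0 : M ≠ 0) (δ : ℤ) (hδ : ¬ ((m:ℤ) ∣ δ)) :
    BB m M δ = 0 := by
  have hmc : (m:ℂ) ≠ 0 := Nat.cast_ne_zero.mpr hm
  have hmr : (m:ℝ) ≠ 0 := Nat.cast_ne_zero.mpr hm
  set ζ : ℂ := Complex.exp (Complex.I * ((2*Real.pi/m : ℝ):ℂ) * (δ:ℂ)) with hζ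
  have hζm : ζ^m = 1 := by
    rw [hζ, ← Complex.exp_nat_mul,
      show (m:ℂ) * (Complex.I * ((2*Real.pi/m : ℝ):ℂ) * (δ:ℂ)) = (δ:ℂ)*(2*(Real.pi:ℂ)*Complex.I) by
        push_cast; field_simp]
    exact Complex.exp_int_mul_two_pi_mul_I δ
  have hζ1 : ζ ≠ 1 := by
    intro h
    rw [hζ, Complex.exp_eq_one_iff] at h
    obtain ⟨n, hn⟩ := h
    have h2 : ((2*Real.pi/m*δ : ℝ):ℂ) * Complex.I = (((n:ℝ)*(2*Real.pi) : ℝ):ℂ) * Complex.I := by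
      push_cast
      push_cast at hn
      linear_combination hn
    have h3 : (2*Real.pi/m*δ : ℝ) = ((n:ℝ)*(2*Real.pi) : ℝ) := by
      exact_mod_cast mul_right_cancel₀ Complex.I_ne_zero h2
    have h4 : (δ : ℝ) = (n:ℝ)*m := by
      have hpi : (2*Real.pi) ≠ 0 := by positivity
      field_simp at h3
      nlinarith [h3, Real.pi_pos]
    have h5 : δ = n * m := by exact_mod_cast h4
    exact hδ ⟨n, by rw [h5]; ring⟩
  unfold BB
  set e : Fin m × Fin (2*M) ≃ Fin (2*m*M) :=
    finProdFinEquiv.trans (finCongr (by ring)) with he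
  rw [← Equiv.sum_comp e, Fintype.sum_prod_type]
  have hterm : ∀ (t : Fin m) (j : Fin (2*M)),
      sgA M ((e (t,j) : Fin (2*m*M)) : ℕ) *
        Complex.exp (Complex.I * ((thetaN (2*m*M) ((e (t,j) : Fin (2*m*M)) : ℕ) : ℝ):ℂ) * (δ:ℂ))
      = ζ^(t:ℕ) * (sgA M (j:ℕ) *
          Complex.exp (Complex.I * ((thetaN (2*m*M) (j:ℕ) : ℝ):ℂ) * (δ:ℂ))) := by
    intro t j
    have hval : ((e (t,j) : Fin (2*m*M)) : ℕ) = (j:ℕ) + 2*M*(t:ℕ) := by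
      simp [he, finCongr_apply, finProdFinEquiv_apply_val]
    rw [hval, thetaN_shift_small m M hm hM0,
      show (j:ℕ) + 2*M*(t:ℕ) = (j:ℕ) + M*(2*(t:ℕ)) by ring, sgA_period M hM0,
      show Complex.I * (((thetaN (2*m*M) (j:ℕ) + 2*Real.pi/m*(t:ℕ) : ℝ)):ℂ) * (δ:ℂ)
        = ((t:ℕ):ℂ) * (Complex.I * ((2*Real.pi/m : ℝ):ℂ) * (δ:ℂ))
          + Complex.I * ((thetaN (2*m*M) (j:ℕ) : ℝ):ℂ) * (δ:ℂ) by push_cast; ring,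
      Complex.exp_add, Complex.exp_nat_mul]
    ring
  calc (∑ t : Fin m, ∑ j : Fin (2*M), sgA M ((e (t,j) : Fin (2*m*M)) : ℕ) *
        Complex.exp (Complex.I * ((thetaN (2*m*M) ((e (t,j) : Fin (2*m*M)) : ℕ) : ℝ):ℂ) * (δ:ℂ)))
      = ∑ t : Fin m, ζ^(t:ℕ) * ∑ j : Fin (2*M), (sgA M (j:ℕ) *
          Complex.exp (Complex.I * ((thetaN (2*m*M) (j:ℕ) : ℝ):ℂ) * (δ:ℂ))) := by
        apply Finset.sum_congr rfl
        intro t _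
        rw [Finset.mul_sum]
        exact Finset.sum_congr rfl fun j _ => hterm t j
    _ = (∑ t : Fin m, ζ^(t:ℕ)) * ∑ j : Fin (2*M), (sgA M (j:ℕ) *
          Complex.exp (Complex.I * ((thetaN (2*m*M) (j:ℕ) : ℝ):ℂ) * (δ:ℂ))) := by
        rw [Finset.sum_mul]
    _ = 0 := by
        have : (∑ t : Fin m, ζ^(t:ℕ)) = 0 := by
          rw [Fin.sum_univ_eq_sum_range (fun i => ζ^i) m, geom_sum_eq hζ1, hζm]
          simp
        rw [this, zero_mul]

lemma TA_reflect (M : ℕ) (hM : Even M) (hM0 : M ≠ 0) (q : ℤ) (hq : Odd q) :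
    TA M q = TA M (-q) := by
  unfold TA
  rw [← Equiv.sum_comp (Fin.revPerm : Equiv.Perm (Fin M))]
  apply Finset.sum_congr rfl
  intro j _
  have hval : ((Fin.revPerm j : Fin M) : ℕ) = M - 1 - (j:ℕ) := by
    simp [Fin.revPerm, Fin.val_rev]
    omega
  rw [hval, sgA_rev M hM hM0 (j:ℕ) j.isLt, phiA_rev M hM0 (j:ℕ) j.isLt, expI_pi_sub _ q hq]
  ring

lemma Gf_dep (L : ℕ) (f : ℂ → ℂ) (n n' p p' : Fin L) (h : (n:ℤ) - (n':ℤ) = (p:ℤ) - (p':ℤ)) :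
    Gf L f n n' = Gf L f p p' := by
  unfold Gf
  rw [Matrix.of_apply, Matrix.of_apply, h]

lemma Gf_big_eq (m M : ℕ) (hm : m ≠ 0) (hM : Even M) (hM0 : M ≠ 0)
    (n n' : Fin (2*m*M)) (δ : ℤ) (h : (n:ℤ) - (n':ℤ) = δ) :
    Gf (2*m*M) (fun z => z ^ (m:ℤ) + z ^ (-(m:ℤ))) n n'
      = (-1:ℂ)^δ / ((2*m*M : ℕ):ℂ) * BB m M δ := by
  unfold Gf BB
  rw [Matrix.of_apply, h]
  congr 1
  apply Finset.sum_congr rfl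
  intro k _
  rw [theta_eq, ratio_big m M hm hM hM0 (k:ℕ)]

lemma Gf_small_eq (M : ℕ) (hM : Even M) (hM0 : M ≠ 0)
    (a b : Fin M) (e : ℤ) (h : (a:ℤ) - (b:ℤ) = e) :
    Gf M (fun z => z + 1) a b = (-1:ℂ)^e / (M:ℂ) * TA M (2*e+1) := by
  unfold Gf TA
  rw [Matrix.of_apply, h, Finset.mul_sum, Finset.mul_sum]
  apply Finset.sum_congr rfl
  intro j _
  beta_reduce
  rw [theta_eq, ratio_small M hM hM0 (j:ℕ), theta_small M hM0 (j:ℕ)]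
  have hE : Complex.exp (Complex.I * ((phiA M (j:ℕ):ℝ):ℂ))
        * Complex.exp (Complex.I * ((2 * phiA M (j:ℕ) : ℝ):ℂ) * ((e:ℤ):ℂ))
      = Complex.exp (Complex.I * ((phiA M (j:ℕ):ℝ):ℂ) * ((2*e+1 : ℤ):ℂ)) := by
    rw [← Complex.exp_add]; congr 1; push_cast; ring
  linear_combination ((-1:ℂ)^e / (M:ℂ) * sgA M (j:ℕ)) * hE

lemma permMat_conj {M : ℕ} (σ : Equiv.Perm (Fin M)) (A : Matrix (Fin M) (Fin M) ℂ)
    (a b : Fin M) : ((permMat σ)ᵀ * A * permMat σ) a b = A (σ a) (σ b) := by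
  simp only [Matrix.mul_apply, Matrix.transpose_apply, permMat, Matrix.of_apply,
    ite_mul, one_mul, zero_mul, mul_ite, mul_one, mul_zero,
    Finset.sum_ite_eq, Finset.sum_ite_eq', Finset.mem_univ, if_true]


/-- **Block reduction for `f(z) = z^m + z^{-m}`.**  Let `m ≥ 1`, `2m ∣ L`, and
`M = L/(2m)` even.  Then, grouping the sites by residue classes mod `2m`:
(i) entries between different residues mod `m` vanish; (ii) within each residue
`r`, the two diagonal `M×M` sub-blocks vanish, so each block has the form
`[[0, X],[Xᵀ, 0]]` with `X_{ab} = G_{r+(a-1)·2m, r+m+(b-1)·2m}`;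
(iii) the matrix `X` is the same for every residue `r`; and
(iv) `X = ε · U Pᵀ G^{(z+1)}(M) P U^*` for some permutation matrix `P`,
diagonal unitary `U`, and sign `ε ∈ {±1}`. -/
theorem block_reduction_zm_plus_zminv (m L M : ℕ) (hm : 1 ≤ m) (hL : 0 < L)
    (hdvd : 2 * m ∣ L) (hM : M = L / (2 * m)) (hMeven : Even M)
    (hprod : 2 * m * M = L) :
    -- (i) entries between different residues mod m vanish
    (∀ j k : Fin L, ¬ ((j : ℤ) ≡ (k : ℤ) [ZMOD (m : ℤ)]) →
      Gf L (fun z => z ^ (m : ℤ) + z ^ (-(m : ℤ))) j k = 0) ∧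
    -- (ii) the diagonal M×M sub-blocks vanish and the off-diagonal ones are
    -- transposes of each other
    (∀ (r : Fin m) (a b : Fin M),
      Gf L (fun z => z ^ (m : ℤ) + z ^ (-(m : ℤ)))
        (siteA m M L hprod r a) (siteA m M L hprod r b) = 0 ∧
      Gf L (fun z => z ^ (m : ℤ) + z ^ (-(m : ℤ)))
        (siteB m M L hprod r a) (siteB m M L hprod r b) = 0 ∧
      Gf L (fun z => z ^ (m : ℤ) + z ^ (-(m : ℤ)))
        (siteB m M L hprod r a) (siteA m M L hprod r b) =
      Gf L (fun z => z ^ (m : ℤ) + z ^ (-(m : ℤ)))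
        (siteA m M L hprod r b) (siteB m M L hprod r a)) ∧
    -- (iii) the block X is independent of the residue r
    (∀ (r r' : Fin m) (a b : Fin M),
      Gf L (fun z => z ^ (m : ℤ) + z ^ (-(m : ℤ)))
        (siteA m M L hprod r a) (siteB m M L hprod r b) =
      Gf L (fun z => z ^ (m : ℤ) + z ^ (-(m : ℤ)))
        (siteA m M L hprod r' a) (siteB m M L hprod r' b)) ∧
    -- (iv) X is gauge-equivalent to G^{(z+1)}(M)
    (∀ r : Fin m, ∃ (σ : Equiv.Perm (Fin M)) (u : Fin M → ℂ) (ε : ℂ),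
      (∀ i, ‖u i‖ = 1) ∧ (ε = 1 ∨ ε = -1) ∧
      (Matrix.of fun a b : Fin M =>
          Gf L (fun z => z ^ (m : ℤ) + z ^ (-(m : ℤ)))
            (siteA m M L hprod r a) (siteB m M L hprod r b)) =
        ε • (Matrix.diagonal u * (permMat σ)ᵀ * Gf M (fun z => z + 1) * permMat σ *
          Matrix.diagonal fun i => star (u i))) := by
  subst hprod
  have hm0 : m ≠ 0 := by omega
  have hM0 : M ≠ 0 := by rintro rfl; simp at hL
  have neg1ne : (-1:ℂ) ≠ 0 := by norm_num
  refine ⟨?_, ?_, ?_, ?_⟩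
  · -- (i)
    intro j k hjk
    have hd : ¬ ((m:ℤ) ∣ ((j:ℤ) - (k:ℤ))) := by
      intro hdvd2
      apply hjk
      rw [Int.modEq_iff_dvd]
      have := (dvd_neg (α := ℤ)).mpr hdvd2
      rwa [neg_sub] at this
    rw [Gf_big_eq m M hm0 hMeven hM0 j k _ rfl, BB_nondvd m M hm0 hM0 _ hd, mul_zero]
  · -- (ii)
    intro r a b
    refine ⟨?_, ?_, ?_⟩
    · rw [Gf_big_eq m M hm0 hMeven hM0 _ _ ((m:ℤ)*(2*((a:ℤ)-(b:ℤ))))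
        (by simp only [siteA]; push_cast; ring),
        BB_even m M hm0 hMeven hM0 _ (even_two_mul _), mul_zero]
    · rw [Gf_big_eq m M hm0 hMeven hM0 _ _ ((m:ℤ)*(2*((a:ℤ)-(b:ℤ))))
        (by simp only [siteB]; push_cast; ring),
        BB_even m M hm0 hMeven hM0 _ (even_two_mul _), mul_zero]
    · rw [Gf_big_eq m M hm0 hMeven hM0 _ _ ((m:ℤ)*(2*((a:ℤ)-(b:ℤ))+1))
        (by simp only [siteA, siteB]; push_cast; ring),
        Gf_big_eq m M hm0 hMeven hM0 _ _ ((m:ℤ)*(-(2*((a:ℤ)-(b:ℤ))+1)))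
        (by simp only [siteA, siteB]; push_cast; ring),
        BB_odd m M hm0 hMeven hM0 _ ⟨(a:ℤ)-(b:ℤ), by ring⟩,
        BB_odd m M hm0 hMeven hM0 _ (Odd.neg ⟨(a:ℤ)-(b:ℤ), by ring⟩),
        TA_reflect M hMeven hM0 _ ⟨(a:ℤ)-(b:ℤ), by ring⟩,
        negOne_zpow_congr ((m:ℤ)*(2*((a:ℤ)-(b:ℤ))+1)) ((m:ℤ)*(-(2*((a:ℤ)-(b:ℤ))+1)))
          ⟨(m:ℤ)*(2*((a:ℤ)-(b:ℤ))+1), by ring⟩]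
  · -- (iii)
    intro r r' a b
    apply Gf_dep
    simp only [siteA, siteB]
    push_cast
    ring
  · -- (iv)
    intro r
    refine ⟨Fin.revPerm, fun i => (-1:ℂ)^(i:ℕ), (-1:ℂ)^m, ?_, ?_, ?_⟩
    · intro i; simp
    · rcases Nat.even_or_odd m with h | h
      · left; exact h.neg_one_pow
      · right; exact h.neg_one_pow
    · ext a b
      rw [Matrix.of_apply, Matrix.smul_apply,
        show Matrix.diagonal (fun i : Fin M => (-1:ℂ)^(i:ℕ)) * (permMat Fin.revPerm)ᵀ *
            Gf M (fun z => z+1) * permMat Fin.revPerm *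
            Matrix.diagonal (fun i : Fin M => star ((-1:ℂ)^(i:ℕ)))
          = Matrix.diagonal (fun i : Fin M => (-1:ℂ)^(i:ℕ)) *
              ((((permMat Fin.revPerm)ᵀ * Gf M (fun z => z+1)) * permMat Fin.revPerm) *
                Matrix.diagonal (fun i : Fin M => star ((-1:ℂ)^(i:ℕ)))) from by
          simp only [Matrix.mul_assoc],
        Matrix.diagonal_mul, Matrix.mul_diagonal, permMat_conj]
      have hrevab : ((Fin.revPerm a : Fin M):ℤ) - ((Fin.revPerm b : Fin M):ℤ) = (b:ℤ) - (a:ℤ) := by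
        have ha := a.isLt; have hb := b.isLt
        have h1 : ((Fin.revPerm a : Fin M):ℕ) = M - 1 - (a:ℕ) := by
          simp [Fin.revPerm, Fin.val_rev]; omega
        have h2 : ((Fin.revPerm b : Fin M):ℕ) = M - 1 - (b:ℕ) := by
          simp [Fin.revPerm, Fin.val_rev]; omega
        rw [h1, h2]
        omega
      rw [Gf_small_eq M hMeven hM0 _ _ ((b:ℤ)-(a:ℤ)) hrevab,
        Gf_big_eq m M hm0 hMeven hM0 _ _ ((m:ℤ)*(2*((a:ℤ)-(b:ℤ))-1))
          (by simp only [siteA, siteB]; push_cast; ring),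
        BB_odd m M hm0 hMeven hM0 _ ⟨(a:ℤ)-(b:ℤ)-1, by ring⟩,
        TA_reflect M hMeven hM0 _ ⟨(a:ℤ)-(b:ℤ)-1, by ring⟩,
        show -(2*((a:ℤ)-(b:ℤ))-1) = 2*((b:ℤ)-(a:ℤ))+1 from by ring]
      simp only [smul_eq_mul, star_pow, star_neg, star_one]
      have hsig : (-1:ℂ)^((m:ℤ)*(2*((a:ℤ)-(b:ℤ))-1))
          = (-1:ℂ)^(m:ℕ) * (-1:ℂ)^((a:ℕ)) * (-1:ℂ)^((b:ℤ)-(a:ℤ)) * (-1:ℂ)^((b:ℕ)) := by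
        rw [← zpow_natCast (-1:ℂ) m, ← zpow_natCast (-1:ℂ) (a:ℕ), ← zpow_natCast (-1:ℂ) (b:ℕ),
          ← zpow_add₀ neg1ne, ← zpow_add₀ neg1ne, ← zpow_add₀ neg1ne]
        apply negOne_zpow_congr
        exact ⟨(m:ℤ)*((a:ℤ)-(b:ℤ)) - (m:ℤ) - (b:ℤ), by ring⟩
      rw [hsig]
      have hMc : (M:ℂ) ≠ 0 := Nat.cast_ne_zero.mpr hM0
      have hmc : (m:ℂ) ≠ 0 := Nat.cast_ne_zero.mpr hm0
      push_cast
      field_simp
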